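/- Let U ⊆ ℂⁿ be open, K ⊂ U compact, and r : U → ℝ of class C² with continuous second-order derivatives. Then for every α > 0 there exists δ > 0 such that for every C² function s : U → ℝ with ‖r − s‖_{C²(U)} < δ and all points ζ, ξ, z, w ∈ K with ‖ξ − ζ‖ < δ and ‖w − z‖ < δ, one has |P_r(z;ζ) − P_s(w;ξ)| < α, where P_r(·;ζ) and P_s(·;ξ) denote the Levi polynomials of r at ζ and of s at ξ respectively. -/

import Mathlib

open Complex Metric Set

noncomputable section

/-- The `j`-th standard basis vector of `ℂⁿ`. -/
def stdBasis (n : ℕ) (j : Fin n) : EuclideanSpace ℂ (Fin n) :=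
  EuclideanSpace.single j 1

/-- Wirtinger derivative `∂r/∂z_j = (1/2)(∂r/∂x_j − i ∂r/∂y_j)` of `r : ℂⁿ → ℝ` at `z`. -/
def wirtingerZ {n : ℕ} (r : EuclideanSpace ℂ (Fin n) → ℝ)
    (z : EuclideanSpace ℂ (Fin n)) (j : Fin n) : ℂ :=
  (1 / 2 : ℂ) * (((fderiv ℝ r z (stdBasis n j) : ℝ) : ℂ)
    - Complex.I * ((fderiv ℝ r z (Complex.I • stdBasis n j) : ℝ) : ℂ))

/-- Wirtinger derivative `∂r/∂z̄_j = (1/2)(∂r/∂x_j + i ∂r/∂y_j)` of `r : ℂⁿ → ℝ` at `z`. -/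
def wirtingerZbar {n : ℕ} (r : EuclideanSpace ℂ (Fin n) → ℝ)
    (z : EuclideanSpace ℂ (Fin n)) (j : Fin n) : ℂ :=
  (1 / 2 : ℂ) * (((fderiv ℝ r z (stdBasis n j) : ℝ) : ℂ)
    + Complex.I * ((fderiv ℝ r z (Complex.I • stdBasis n j) : ℝ) : ℂ))

/-- Second Wirtinger derivative `∂²r/∂z_i∂z_j` of `r : ℂⁿ → ℝ` at `z`. -/
def wirtingerZZ {n : ℕ} (r : EuclideanSpace ℂ (Fin n) → ℝ)
    (z : EuclideanSpace ℂ (Fin n)) (i j : Fin n) : ℂ :=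
  (1 / 4 : ℂ) *
    (((fderiv ℝ (fderiv ℝ r) z (stdBasis n i) (stdBasis n j) : ℝ) : ℂ)
      - ((fderiv ℝ (fderiv ℝ r) z (Complex.I • stdBasis n i) (Complex.I • stdBasis n j) : ℝ) : ℂ)
      - Complex.I * (((fderiv ℝ (fderiv ℝ r) z (stdBasis n i) (Complex.I • stdBasis n j) : ℝ) : ℂ)
        + ((fderiv ℝ (fderiv ℝ r) z (Complex.I • stdBasis n i) (stdBasis n j) : ℝ) : ℂ)))

/-- Second Wirtinger derivative `∂²r/∂z_i∂z̄_j` of `r : ℂⁿ → ℝ` at `z`. -/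
def wirtingerZZbar {n : ℕ} (r : EuclideanSpace ℂ (Fin n) → ℝ)
    (z : EuclideanSpace ℂ (Fin n)) (i j : Fin n) : ℂ :=
  (1 / 4 : ℂ) *
    (((fderiv ℝ (fderiv ℝ r) z (stdBasis n i) (stdBasis n j) : ℝ) : ℂ)
      + ((fderiv ℝ (fderiv ℝ r) z (Complex.I • stdBasis n i) (Complex.I • stdBasis n j) : ℝ) : ℂ)
      + Complex.I * (((fderiv ℝ (fderiv ℝ r) z (stdBasis n i) (Complex.I • stdBasis n j) : ℝ) : ℂ)
        - ((fderiv ℝ (fderiv ℝ r) z (Complex.I • stdBasis n i) (stdBasis n j) : ℝ) : ℂ)))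

/-- The Levi form `L_r(z;X) = Σ_{i,j} (∂²r/∂z_i∂z̄_j)(z) X_i conj(X_j)`
(a real number, for real-valued `C²` functions `r`). -/
def leviForm {n : ℕ} (r : EuclideanSpace ℂ (Fin n) → ℝ)
    (z X : EuclideanSpace ℂ (Fin n)) : ℝ :=
  (∑ i : Fin n, ∑ j : Fin n,
    wirtingerZZbar r z i j * X i * (starRingEnd ℂ) (X j)).re

/-- The Levi polynomial
`P(z;ζ) = −Σ_j (∂r/∂z_j)(ζ)(z_j−ζ_j) − (1/2) Σ_{i,j} (∂²r/∂z_i∂z_j)(ζ)(z_i−ζ_i)(z_j−ζ_j)`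
of `r` at `ζ`, evaluated at `z` (first argument `ζ`, second `z`). -/
def leviPolynomial {n : ℕ} (r : EuclideanSpace ℂ (Fin n) → ℝ)
    (ζ z : EuclideanSpace ℂ (Fin n)) : ℂ :=
  - (∑ j : Fin n, wirtingerZ r ζ j * (z j - ζ j))
    - (1 / 2 : ℂ) * ∑ i : Fin n, ∑ j : Fin n,
        wirtingerZZ r ζ i j * (z i - ζ i) * (z j - ζ j)

/-- The complex gradient `∇r(z) = (∂r/∂z̄_1(z), …, ∂r/∂z̄_n(z))`. -/
def wirtingerGrad {n : ℕ} (r : EuclideanSpace ℂ (Fin n) → ℝ)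
    (z : EuclideanSpace ℂ (Fin n)) : EuclideanSpace ℂ (Fin n) :=
  (WithLp.equiv 2 (Fin n → ℂ)).symm fun j => wirtingerZbar r z j

/-- `‖f‖_{C²(U)} < ε`: the function and its first- and second-order derivatives
are bounded by `ε` on `U`. -/
def C2NormLtOn {n : ℕ} (f : EuclideanSpace ℂ (Fin n) → ℝ)
    (U : Set (EuclideanSpace ℂ (Fin n))) (ε : ℝ) : Prop :=
  ∀ z ∈ U, |f z| < ε ∧ ‖fderiv ℝ f z‖ < ε ∧ ‖fderiv ℝ (fderiv ℝ f) z‖ < ε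


section Aux
variable {n : ℕ}

lemma norm_stdBasis (j : Fin n) : ‖stdBasis n j‖ = 1 := by
  simp [stdBasis, EuclideanSpace.norm_single]

lemma norm_I_smul_stdBasis (j : Fin n) : ‖Complex.I • stdBasis n j‖ = 1 := by
  rw [norm_smul, Complex.norm_I, norm_stdBasis, one_mul]

lemma abs_coord_le (x : EuclideanSpace ℂ (Fin n)) (i : Fin n) :
    ‖x i‖ ≤ ‖x‖ := by
  rw [EuclideanSpace.norm_eq]
  calc ‖x i‖ = Real.sqrt (‖x i‖ ^ 2) := (Real.sqrt_sq (norm_nonneg _)).symm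
    _ ≤ _ := Real.sqrt_le_sqrt (Finset.single_le_sum
        (f := fun j => ‖x j‖ ^ 2) (fun j _ => sq_nonneg _) (Finset.mem_univ i))

lemma apply_le_opNorm (T : EuclideanSpace ℂ (Fin n) →L[ℝ] ℝ)
    (u : EuclideanSpace ℂ (Fin n)) (hu : ‖u‖ = 1) : |T u| ≤ ‖T‖ := by
  have := T.le_opNorm u
  rwa [hu, mul_one, Real.norm_eq_abs] at this

lemma apply2_le_opNorm
    (T : EuclideanSpace ℂ (Fin n) →L[ℝ] (EuclideanSpace ℂ (Fin n) →L[ℝ] ℝ))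
    (u v : EuclideanSpace ℂ (Fin n)) (hu : ‖u‖ = 1) (hv : ‖v‖ = 1) :
    |T u v| ≤ ‖T‖ := by
  have h1 := (T u).le_opNorm v
  have h2 := T.le_opNorm u
  rw [hu, mul_one] at h2
  rw [hv, mul_one, Real.norm_eq_abs] at h1
  exact h1.trans h2

lemma abs_wirtingerZ_le (f : EuclideanSpace ℂ (Fin n) → ℝ)
    (ξ : EuclideanSpace ℂ (Fin n)) (j : Fin n) :
    ‖wirtingerZ f ξ j‖ ≤ ‖fderiv ℝ f ξ‖ := by
  unfold wirtingerZ
  rw [norm_mul]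
  have h1 : ‖(1 / 2 : ℂ)‖ = 1 / 2 := by
    simp
  rw [h1]
  have h2 : ‖((fderiv ℝ f ξ (stdBasis n j) : ℝ) : ℂ)
      - Complex.I * ((fderiv ℝ f ξ (Complex.I • stdBasis n j) : ℝ) : ℂ)‖
      ≤ ‖fderiv ℝ f ξ‖ + ‖fderiv ℝ f ξ‖ := by
    refine (norm_sub_le _ _).trans ?_
    rw [norm_mul, Complex.norm_I, one_mul, Complex.norm_real, Complex.norm_real,
      Real.norm_eq_abs, Real.norm_eq_abs]
    exact add_le_add (apply_le_opNorm _ _ (norm_stdBasis j))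
      (apply_le_opNorm _ _ (norm_I_smul_stdBasis j))
  linarith

lemma abs_wirtingerZZ_le (f : EuclideanSpace ℂ (Fin n) → ℝ)
    (ξ : EuclideanSpace ℂ (Fin n)) (i j : Fin n) :
    ‖wirtingerZZ f ξ i j‖ ≤ ‖fderiv ℝ (fderiv ℝ f) ξ‖ := by
  unfold wirtingerZZ
  rw [norm_mul]
  have h1 : ‖(1 / 4 : ℂ)‖ = 1 / 4 := by simp
  rw [h1]
  set T := fderiv ℝ (fderiv ℝ f) ξ
  set e := fun k => stdBasis n k
  set ie := fun k => Complex.I • stdBasis n k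
  have b : ∀ u v : EuclideanSpace ℂ (Fin n), ‖u‖ = 1 → ‖v‖ = 1 → |T u v| ≤ ‖T‖ :=
    fun u v hu hv => apply2_le_opNorm T u v hu hv
  have h2 : ‖(((T (e i)) (e j) : ℝ) : ℂ) - (((T (ie i)) (ie j) : ℝ) : ℂ)
      - Complex.I * ((((T (e i)) (ie j) : ℝ) : ℂ) + (((T (ie i)) (e j) : ℝ) : ℂ))‖
      ≤ ‖T‖ + ‖T‖ + (‖T‖ + ‖T‖) := by
    refine (norm_sub_le _ _).trans (add_le_add
      ((norm_sub_le _ _).trans (add_le_add ?_ ?_)) ?_)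
    · rw [Complex.norm_real, Real.norm_eq_abs]
      exact b _ _ (norm_stdBasis i) (norm_stdBasis j)
    · rw [Complex.norm_real, Real.norm_eq_abs]
      exact b _ _ (norm_I_smul_stdBasis i) (norm_I_smul_stdBasis j)
    · rw [norm_mul, Complex.norm_I, one_mul]
      refine (norm_add_le _ _).trans ?_
      rw [Complex.norm_real, Complex.norm_real, Real.norm_eq_abs, Real.norm_eq_abs]
      exact add_le_add (b _ _ (norm_stdBasis i) (norm_I_smul_stdBasis j))
        (b _ _ (norm_I_smul_stdBasis i) (norm_stdBasis j))
  linarith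


lemma leviPolynomial_abs_le (f : EuclideanSpace ℂ (Fin n) → ℝ)
    (ξ w : EuclideanSpace ℂ (Fin n)) :
    ‖leviPolynomial f ξ w‖ ≤
      n * ‖fderiv ℝ f ξ‖ * ‖w - ξ‖
        + (n ^ 2 / 2) * ‖fderiv ℝ (fderiv ℝ f) ξ‖ * ‖w - ξ‖ ^ 2 := by
  have hcoord : ∀ i : Fin n, ‖w i - ξ i‖ ≤ ‖w - ξ‖ := by
    intro i
    have : w i - ξ i = (w - ξ) i := rfl
    rw [this]
    exact abs_coord_le _ i
  unfold leviPolynomial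
  refine (norm_sub_le _ _).trans (add_le_add ?_ ?_)
  · rw [norm_neg]
    refine (norm_sum_le _ _).trans ?_
    calc ∑ j : Fin n, ‖wirtingerZ f ξ j * (w j - ξ j)‖
        ≤ ∑ _j : Fin n, ‖fderiv ℝ f ξ‖ * ‖w - ξ‖ := by
          refine Finset.sum_le_sum fun j _ => ?_
          rw [norm_mul]
          exact mul_le_mul (abs_wirtingerZ_le f ξ j) (hcoord j)
            (norm_nonneg _) (norm_nonneg _)
      _ = n * ‖fderiv ℝ f ξ‖ * ‖w - ξ‖ := by
          rw [Finset.sum_const, Finset.card_univ, Fintype.card_fin, nsmul_eq_mul]; ring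
  · rw [norm_mul]
    have h1 : ‖(1 / 2 : ℂ)‖ = 1 / 2 := by simp
    rw [h1]
    have : ‖∑ i : Fin n, ∑ j : Fin n,
        wirtingerZZ f ξ i j * (w i - ξ i) * (w j - ξ j)‖
        ≤ n ^ 2 * ‖fderiv ℝ (fderiv ℝ f) ξ‖ * ‖w - ξ‖ ^ 2 := by
      refine (norm_sum_le _ _).trans ?_
      calc ∑ i : Fin n, ‖∑ j : Fin n,
            wirtingerZZ f ξ i j * (w i - ξ i) * (w j - ξ j)‖
          ≤ ∑ _i : Fin n, ∑ _j : Fin n,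
            ‖fderiv ℝ (fderiv ℝ f) ξ‖ * ‖w - ξ‖ * ‖w - ξ‖ := by
            refine Finset.sum_le_sum fun i _ => ?_
            refine (norm_sum_le _ _).trans ?_
            refine Finset.sum_le_sum fun j _ => ?_
            rw [norm_mul, norm_mul]
            refine mul_le_mul (mul_le_mul (abs_wirtingerZZ_le f ξ i j) (hcoord i)
              (norm_nonneg _) (by positivity)) (hcoord j)
              (norm_nonneg _) ?_
            positivity
        _ = n ^ 2 * ‖fderiv ℝ (fderiv ℝ f) ξ‖ * ‖w - ξ‖ ^ 2 := by
            simp [Finset.sum_const, Finset.card_univ, Fintype.card_fin, nsmul_eq_mul]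
            ring
    linarith


lemma leviPolynomial_sub {U : Set (EuclideanSpace ℂ (Fin n))} (hU : IsOpen U)
    {r s : EuclideanSpace ℂ (Fin n) → ℝ}
    (hr : ContDiffOn ℝ 2 r U) (hs : ContDiffOn ℝ 2 s U)
    {ξ : EuclideanSpace ℂ (Fin n)} (hξ : ξ ∈ U) (w : EuclideanSpace ℂ (Fin n)) :
    leviPolynomial (fun z => r z - s z) ξ w
      = leviPolynomial r ξ w - leviPolynomial s ξ w := by
  have hdr : ∀ x ∈ U, DifferentiableAt ℝ r x := fun x hx =>
    (hr.contDiffAt (hU.mem_nhds hx)).differentiableAt (by norm_num)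
  have hds : ∀ x ∈ U, DifferentiableAt ℝ s x := fun x hx =>
    (hs.contDiffAt (hU.mem_nhds hx)).differentiableAt (by norm_num)
  have f1 : fderiv ℝ (fun z => r z - s z) ξ = fderiv ℝ r ξ - fderiv ℝ s ξ :=
    fderiv_fun_sub (hdr ξ hξ) (hds ξ hξ)
  have hdr2 : DifferentiableAt ℝ (fderiv ℝ r) ξ :=
    ((hr.contDiffAt (hU.mem_nhds hξ)).fderiv_right (m := 1) (by norm_num)).differentiableAt
      one_ne_zero
  have hds2 : DifferentiableAt ℝ (fderiv ℝ s) ξ :=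
    ((hs.contDiffAt (hU.mem_nhds hξ)).fderiv_right (m := 1) (by norm_num)).differentiableAt
      one_ne_zero
  have f2 : fderiv ℝ (fderiv ℝ (fun z => r z - s z)) ξ
      = fderiv ℝ (fderiv ℝ r) ξ - fderiv ℝ (fderiv ℝ s) ξ := by
    have hev : fderiv ℝ (fun z => r z - s z) =ᶠ[nhds ξ]
        fun x => fderiv ℝ r x - fderiv ℝ s x :=
      Filter.eventually_of_mem (hU.mem_nhds hξ) fun x hx => fderiv_fun_sub (hdr x hx) (hds x hx)
    rw [hev.fderiv_eq, fderiv_fun_sub hdr2 hds2]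
  have wz : ∀ j, wirtingerZ (fun z => r z - s z) ξ j
      = wirtingerZ r ξ j - wirtingerZ s ξ j := by
    intro j
    simp only [wirtingerZ, f1, ContinuousLinearMap.sub_apply, Complex.ofReal_sub]
    ring
  have wzz : ∀ i j, wirtingerZZ (fun z => r z - s z) ξ i j
      = wirtingerZZ r ξ i j - wirtingerZZ s ξ i j := by
    intro i j
    simp only [wirtingerZZ, f2, ContinuousLinearMap.sub_apply, Complex.ofReal_sub]
    ring
  simp only [leviPolynomial, wz, wzz, sub_mul, Finset.sum_sub_distrib, mul_sub]
  ring


lemma leviPolynomial_continuousOn {U : Set (EuclideanSpace ℂ (Fin n))} (hU : IsOpen U)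
    {r : EuclideanSpace ℂ (Fin n) → ℝ} (hr : ContDiffOn ℝ 2 r U) :
    ContinuousOn (fun p : EuclideanSpace ℂ (Fin n) × EuclideanSpace ℂ (Fin n) =>
      leviPolynomial r p.1 p.2) (U ×ˢ U) := by
  have h1 : ContinuousOn (fderiv ℝ r) U :=
    hr.continuousOn_fderiv_of_isOpen hU (by norm_num)
  have h2 : ContinuousOn (fderiv ℝ (fderiv ℝ r)) U :=
    (hr.fderiv_of_isOpen hU (m := 1) (by norm_num)).continuousOn_fderiv_of_isOpen hU le_rfl
  have hfst : ContinuousOn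
      (fun p : EuclideanSpace ℂ (Fin n) × EuclideanSpace ℂ (Fin n) => fderiv ℝ r p.1)
      (U ×ˢ U) := h1.comp continuousOn_fst fun p hp => hp.1
  have hfst2 : ContinuousOn
      (fun p : EuclideanSpace ℂ (Fin n) × EuclideanSpace ℂ (Fin n) =>
        fderiv ℝ (fderiv ℝ r) p.1) (U ×ˢ U) := h2.comp continuousOn_fst fun p hp => hp.1
  have hcoord : ∀ j : Fin n, ContinuousOn
      (fun p : EuclideanSpace ℂ (Fin n) × EuclideanSpace ℂ (Fin n) => p.2 j - p.1 j)
      (U ×ˢ U) := by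
    intro j
    exact (((EuclideanSpace.proj j (𝕜 := ℂ)).continuous.comp continuous_snd).sub
      ((EuclideanSpace.proj j (𝕜 := ℂ)).continuous.comp continuous_fst)).continuousOn
  have hwz : ∀ j : Fin n, ContinuousOn
      (fun p : EuclideanSpace ℂ (Fin n) × EuclideanSpace ℂ (Fin n) => wirtingerZ r p.1 j)
      (U ×ˢ U) := by
    intro j
    unfold wirtingerZ
    refine continuousOn_const.mul (ContinuousOn.sub ?_ (continuousOn_const.mul ?_))
    · exact Complex.continuous_ofReal.comp_continuousOn (hfst.clm_apply continuousOn_const)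
    · exact Complex.continuous_ofReal.comp_continuousOn (hfst.clm_apply continuousOn_const)
  have hwzz : ∀ i j : Fin n, ContinuousOn
      (fun p : EuclideanSpace ℂ (Fin n) × EuclideanSpace ℂ (Fin n) => wirtingerZZ r p.1 i j)
      (U ×ˢ U) := by
    intro i j
    unfold wirtingerZZ
    have base : ∀ u v : EuclideanSpace ℂ (Fin n), ContinuousOn
        (fun p : EuclideanSpace ℂ (Fin n) × EuclideanSpace ℂ (Fin n) =>
          ((fderiv ℝ (fderiv ℝ r) p.1 u v : ℝ) : ℂ)) (U ×ˢ U) := fun u v =>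
      Complex.continuous_ofReal.comp_continuousOn
        ((hfst2.clm_apply continuousOn_const).clm_apply continuousOn_const)
    exact continuousOn_const.mul (((base _ _).sub (base _ _)).sub
      (continuousOn_const.mul ((base _ _).add (base _ _))))
  unfold leviPolynomial
  refine ContinuousOn.sub (ContinuousOn.neg ?_) (continuousOn_const.mul ?_)
  · exact continuousOn_finset_sum _ fun j _ => (hwz j).mul (hcoord j)
  · exact continuousOn_finset_sum _ fun i _ => continuousOn_finset_sum _ fun j _ =>
      (((hwzz i j).mul (hcoord i))).mul (hcoord j)

end Aux

theorem statement13 {n : ℕ} (U : Set (EuclideanSpace ℂ (Fin n))) (hU : IsOpen U)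
    (K : Set (EuclideanSpace ℂ (Fin n))) (hK : IsCompact K) (hKU : K ⊆ U)
    (r : EuclideanSpace ℂ (Fin n) → ℝ) (hr : ContDiffOn ℝ 2 r U) :
    ∀ α : ℝ, 0 < α → ∃ δ : ℝ, 0 < δ ∧
      ∀ s : EuclideanSpace ℂ (Fin n) → ℝ, ContDiffOn ℝ 2 s U →
        C2NormLtOn (fun z => r z - s z) U δ →
        ∀ ζ ∈ K, ∀ ξ ∈ K, ∀ z ∈ K, ∀ w ∈ K, ‖ξ - ζ‖ < δ → ‖w - z‖ < δ →
          ‖leviPolynomial r ζ z - leviPolynomial s ξ w‖ < α := by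
  intro α hα
  obtain ⟨R, hR⟩ := hK.isBounded.subset_closedBall 0
  set M : ℝ := 2 * |R| + 1 with hMdef
  have hM0 : 0 < M := by positivity
  have hMK : ∀ x ∈ K, ∀ y ∈ K, ‖x - y‖ ≤ M := by
    intro x hx y hy
    have h1 : ‖x‖ ≤ |R| := le_trans (mem_closedBall_zero_iff.mp (hR hx)) (le_abs_self R)
    have h2 : ‖y‖ ≤ |R| := le_trans (mem_closedBall_zero_iff.mp (hR hy)) (le_abs_self R)
    calc ‖x - y‖ ≤ ‖x‖ + ‖y‖ := norm_sub_le _ _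
      _ ≤ M := by rw [hMdef]; linarith
  set C : ℝ := n * M + (n ^ 2 / 2) * M ^ 2 + 1 with hCdef
  have hC : 0 < C := by positivity
  set δ₂ : ℝ := α / (2 * C) with hδ₂def
  have hδ₂ : 0 < δ₂ := by positivity
  have huc := (hK.prod hK).uniformContinuousOn_of_continuous
    ((leviPolynomial_continuousOn hU hr).mono (Set.prod_mono hKU hKU))
  rw [Metric.uniformContinuousOn_iff] at huc
  obtain ⟨δ₁, hδ₁, h1⟩ := huc (α / 2) (by positivity)
  refine ⟨min δ₁ δ₂, lt_min hδ₁ hδ₂, ?_⟩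
  intro s hs hns ζ hζ ξ hξ z hz w hw hξζ hwz
  have hd1 : ‖leviPolynomial r ζ z - leviPolynomial r ξ w‖ < α / 2 := by
    have hdist : dist ((ζ, z) : _ × _) (ξ, w) < δ₁ := by
      rw [Prod.dist_eq]
      apply max_lt <;> rw [dist_eq_norm]
      · calc ‖ζ - ξ‖ = ‖ξ - ζ‖ := norm_sub_rev _ _
          _ < min δ₁ δ₂ := hξζ
          _ ≤ δ₁ := min_le_left _ _
      · calc ‖z - w‖ = ‖w - z‖ := norm_sub_rev _ _
          _ < min δ₁ δ₂ := hwz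
          _ ≤ δ₁ := min_le_left _ _
    have := h1 (ζ, z) (Set.mk_mem_prod hζ hz) (ξ, w) (Set.mk_mem_prod hξ hw) hdist
    rwa [Complex.dist_eq] at this
  have hd2 : ‖leviPolynomial r ξ w - leviPolynomial s ξ w‖ < α / 2 := by
    rw [← leviPolynomial_sub hU hr hs (hKU hξ) w]
    obtain ⟨-, hA1, hA2⟩ := hns ξ (hKU hξ)
    have hA1' : ‖fderiv ℝ (fun z => r z - s z) ξ‖ ≤ δ₂ :=
      le_of_lt (lt_of_lt_of_le hA1 (min_le_right _ _))
    have hA2' : ‖fderiv ℝ (fderiv ℝ (fun z => r z - s z)) ξ‖ ≤ δ₂ :=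
      le_of_lt (lt_of_lt_of_le hA2 (min_le_right _ _))
    have hwM : ‖w - ξ‖ ≤ M := hMK w hw ξ hξ
    calc ‖leviPolynomial (fun z => r z - s z) ξ w‖
        ≤ n * ‖fderiv ℝ (fun z => r z - s z) ξ‖ * ‖w - ξ‖
          + (n ^ 2 / 2) * ‖fderiv ℝ (fderiv ℝ (fun z => r z - s z)) ξ‖ * ‖w - ξ‖ ^ 2 :=
        leviPolynomial_abs_le _ ξ w
      _ ≤ n * δ₂ * M + (n ^ 2 / 2) * δ₂ * M ^ 2 := by gcongr
      _ = δ₂ * (n * M + (n ^ 2 / 2) * M ^ 2) := by ring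
      _ < δ₂ * C := by
          rw [hCdef]
          apply mul_lt_mul_of_pos_left _ hδ₂
          linarith
      _ = α / 2 := by
          rw [hδ₂def]
          field_simp
  calc ‖leviPolynomial r ζ z - leviPolynomial s ξ w‖
      ≤ ‖leviPolynomial r ζ z - leviPolynomial r ξ w‖
        + ‖leviPolynomial r ξ w - leviPolynomial s ξ w‖ :=
      norm_sub_le_norm_sub_add_norm_sub _ _ _
    _ < α / 2 + α / 2 := add_lt_add hd1 hd2
    _ = α := by ring

end
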